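/- Let G = (A;E) be a countably infinite graph with the extension property, k ≥ 3, f : A^k → A a quasi near-unanimity operation which preserves E, N and ≠ (as a k-ary polymorphism), and R ⊆ A⁴ a quaternary relation preserved by f and invariant under all automorphisms of G, containing either (a) an EN-tuple t and an NE-tuple t′ with t[2] = t[3] and t′[2] = t′[3], or (b) an injective EN-tuple and an injective NE-tuple. Let m ∈ {1,…,k}. If E(f(u),f(s)) (respectively N(f(u),f(s))) holds for every {E,N}-connected constant-injective pair (u,s) of k-tuples with n_E(u,s) = m, then either N(f(u),f(s)) (respectively E(f(u),f(s))) holds for every {E,N}-connected constant-injective pair (u,s) with n_E(u,s) ∈ {k−m, k−m+1}, or R contains an EE-tuple or an NN-tuple. -/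

import Mathlib

universe u

variable {A : Type u}

/-- Non-adjacency relation `N` of a graph with edge relation `E`. -/
def NRel (E : A → A → Prop) (a b : A) : Prop := a ≠ b ∧ ¬ E a b

/-- `uu O` denotes `O ∪ =`. -/
def uu (O : A → A → Prop) (a b : A) : Prop := O a b ∨ a = b

/-- `E` is the edge relation of a simple graph: symmetric and irreflexive. -/
def IsSimpleGraph (E : A → A → Prop) : Prop :=
  (∀ a b, E a b → E b a) ∧ (∀ a, ¬ E a a)

/-- An `n`-ary operation preserves an `m`-ary relation. -/
def Preserves {n m : ℕ} (f : (Fin n → A) → A) (R : Set (Fin m → A)) : Prop :=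
  ∀ t : Fin n → (Fin m → A), (∀ i, t i ∈ R) → (fun j => f (fun i => t i j)) ∈ R

/-- An `n`-ary operation preserves a binary relation `S`. -/
def PreservesRel {n : ℕ} (f : (Fin n → A) → A) (S : A → A → Prop) : Prop :=
  ∀ u v : Fin n → A, (∀ i, S (u i) (v i)) → S (f u) (f v)

/-- A binary (curried) operation preserves an `m`-ary relation. -/
def Preserves2 {m : ℕ} (f : A → A → A) (R : Set (Fin m → A)) : Prop :=
  ∀ t₁ t₂, t₁ ∈ R → t₂ ∈ R → (fun j => f (t₁ j) (t₂ j)) ∈ R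

/-- A ternary (curried) operation preserves an `m`-ary relation. -/
def Preserves3 {m : ℕ} (f : A → A → A → A) (R : Set (Fin m → A)) : Prop :=
  ∀ t₁ t₂ t₃, t₁ ∈ R → t₂ ∈ R → t₃ ∈ R → (fun j => f (t₁ j) (t₂ j) (t₃ j)) ∈ R

/-- `t` is an `OP`-tuple: `(t[1],t[2]) ∈ O` and `(t[3],t[4]) ∈ P`. -/
def IsOP (O P : A → A → Prop) (t : Fin 4 → A) : Prop := O (t 0) (t 1) ∧ P (t 2) (t 3)

/-- A quaternary relation entails a formula `ψ(x₁,x₂,x₃,x₄)`. -/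
def Entails (R : Set (Fin 4 → A)) (ψ : A → A → A → A → Prop) : Prop :=
  ∀ t ∈ R, ψ (t 0) (t 1) (t 2) (t 3)

/-- `R` efficiently entails `S₁(x₁,x₂) → S₂(x₃,x₄)`. -/
def EffEntails (R : Set (Fin 4 → A)) (S₁ S₂ : A → A → Prop) : Prop :=
  (∀ t ∈ R, S₁ (t 0) (t 1) → S₂ (t 2) (t 3)) ∧
  (∃ t ∈ R, S₁ (t 0) (t 1) ∧ S₂ (t 2) (t 3)) ∧
  (∃ t ∈ R, ¬ S₁ (t 0) (t 1) ∧ ¬ S₂ (t 2) (t 3))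

/-- `f` is a quasi near-unanimity operation. -/
def IsQnu {k : ℕ} (f : (Fin k → A) → A) : Prop :=
  ∀ x y : A, ∀ j : Fin k, f (Function.update (fun _ => x) j y) = f (fun _ => x)

/-- `α` is an automorphism of the graph `(A;E)`. -/
def IsGraphAuto (E : A → A → Prop) (α : A ≃ A) : Prop := ∀ a b, E (α a) (α b) ↔ E a b

/-- `R` is invariant under all automorphisms of `(A;E)`. -/
def AutoInvariant {m : ℕ} (E : A → A → Prop) (R : Set (Fin m → A)) : Prop :=
  ∀ α : A ≃ A, IsGraphAuto E α → ∀ t ∈ R, (fun i => α (t i)) ∈ R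

/-- The extension property of the random graph. -/
def ExtensionProperty (E : A → A → Prop) : Prop :=
  ∀ U U' : Finset A, Disjoint U U' →
    ∃ v : A, (∀ u ∈ U, E v u) ∧ (∀ u ∈ U', ¬ E v u)

/-- A binary operation is injective. -/
def BinInj (f : A → A → A) : Prop := Function.Injective (fun p : A × A => f p.1 p.2)

/-- A ternary operation is injective. -/
def TernInj (f : A → A → A → A) : Prop :=
  Function.Injective (fun p : A × A × A => f p.1 p.2.1 p.2.2)

/-- A binary injection is balanced. -/
def BalancedBin (E : A → A → Prop) (f : A → A → A) : Prop :=
  ∀ a₁ a₂ b₁ b₂ : A,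
    (((E a₁ b₁ ∧ a₂ = b₂) ∨ (a₁ = b₁ ∧ E a₂ b₂)) → E (f a₁ a₂) (f b₁ b₂)) ∧
    (((NRel E a₁ b₁ ∧ a₂ = b₂) ∨ (a₁ = b₁ ∧ NRel E a₂ b₂)) → NRel E (f a₁ a₂) (f b₁ b₂))

/-- A binary operation is `E`-dominated. -/
def EDominated (E : A → A → Prop) (f : A → A → A) : Prop :=
  ∀ a₁ a₂ b₁ b₂ : A, ((a₁ = b₁ ∧ a₂ ≠ b₂) ∨ (a₁ ≠ b₁ ∧ a₂ = b₂)) → E (f a₁ a₂) (f b₁ b₂)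

/-- A binary operation is `N`-dominated. -/
def NDominated (E : A → A → Prop) (f : A → A → A) : Prop :=
  ∀ a₁ a₂ b₁ b₂ : A, ((a₁ = b₁ ∧ a₂ ≠ b₂) ∨ (a₁ ≠ b₁ ∧ a₂ = b₂)) → NRel E (f a₁ a₂) (f b₁ b₂)

/-- A binary operation is of behaviour min. -/
def BehMin (E : A → A → Prop) (f : A → A → A) : Prop :=
  ∀ a₁ a₂ b₁ b₂ : A, a₁ ≠ b₁ → a₂ ≠ b₂ →
    (E (f a₁ a₂) (f b₁ b₂) ↔ (E a₁ b₁ ∧ E a₂ b₂))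

/-- A binary operation is of behaviour max. -/
def BehMax (E : A → A → Prop) (f : A → A → A) : Prop :=
  ∀ a₁ a₂ b₁ b₂ : A, a₁ ≠ b₁ → a₂ ≠ b₂ →
    (NRel E (f a₁ a₂) (f b₁ b₂) ↔ (NRel E a₁ b₁ ∧ NRel E a₂ b₂))

/-- A binary operation is of behaviour projection. -/
def BehProj (E : A → A → Prop) (f : A → A → A) : Prop :=
  (∀ a₁ a₂ b₁ b₂ : A, a₁ ≠ b₁ → a₂ ≠ b₂ → (E (f a₁ a₂) (f b₁ b₂) ↔ E a₁ b₁)) ∨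
  (∀ a₁ a₂ b₁ b₂ : A, a₁ ≠ b₁ → a₂ ≠ b₂ → (E (f a₁ a₂) (f b₁ b₂) ↔ E a₂ b₂))

/-- A binary operation is of behaviour xor. -/
def BehXor (E : A → A → Prop) (f : A → A → A) : Prop :=
  ∀ a₁ a₂ b₁ b₂ : A, a₁ ≠ b₁ → a₂ ≠ b₂ →
    (E (f a₁ a₂) (f b₁ b₂) ↔ Xor' (E a₁ b₁) (E a₂ b₂))

/-- A binary operation is of behaviour xnor. -/
def BehXnor (E : A → A → Prop) (f : A → A → A) : Prop :=
  ∀ a₁ a₂ b₁ b₂ : A, a₁ ≠ b₁ → a₂ ≠ b₂ →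
    (E (f a₁ a₂) (f b₁ b₂) ↔ (E a₁ b₁ ↔ E a₂ b₂))

/-- A binary operation is `E`-constant: its image induces a clique. -/
def EConstantBin (E : A → A → Prop) (f : A → A → A) : Prop :=
  ∀ a₁ a₂ b₁ b₂ : A, f a₁ a₂ ≠ f b₁ b₂ → E (f a₁ a₂) (f b₁ b₂)

/-- A binary operation is `N`-constant: its image induces an independent set. -/
def NConstantBin (E : A → A → Prop) (f : A → A → A) : Prop :=
  ∀ a₁ a₂ b₁ b₂ : A, f a₁ a₂ ≠ f b₁ b₂ → NRel E (f a₁ a₂) (f b₁ b₂)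

/-- A ternary operation is of behaviour majority. -/
def BehMajority (E : A → A → Prop) (f : A → A → A → A) : Prop :=
  ∀ a₁ a₂ a₃ b₁ b₂ b₃ : A, a₁ ≠ b₁ → a₂ ≠ b₂ → a₃ ≠ b₃ →
    (E (f a₁ a₂ a₃) (f b₁ b₂ b₃) ↔
      ((E a₁ b₁ ∧ E a₂ b₂) ∨ (E a₁ b₁ ∧ E a₃ b₃) ∨ (E a₂ b₂ ∧ E a₃ b₃)))

/-- A ternary operation is of behaviour minority. -/
def BehMinority (E : A → A → Prop) (f : A → A → A → A) : Prop :=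
  ∀ a₁ a₂ a₃ b₁ b₂ b₃ : A, a₁ ≠ b₁ → a₂ ≠ b₂ → a₃ ≠ b₃ →
    (NRel E (f a₁ a₂ a₃) (f b₁ b₂ b₃) ↔
      ((NRel E a₁ b₁ ∧ NRel E a₂ b₂ ∧ NRel E a₃ b₃) ∨
       (E a₁ b₁ ∧ E a₂ b₂ ∧ NRel E a₃ b₃) ∨
       (E a₁ b₁ ∧ NRel E a₂ b₂ ∧ E a₃ b₃) ∨
       (NRel E a₁ b₁ ∧ E a₂ b₂ ∧ E a₃ b₃)))

/-- A ternary operation hyperplanely has the binary behaviour `P`. -/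
def Hyperplanely (P : (A → A → A) → Prop) (f : A → A → A → A) : Prop :=
  ∀ c : A, P (fun x y => f x y c) ∧ P (fun x y => f x c y) ∧ P (fun x y => f c x y)

/-- `n_E(u,s)`: the number of coordinates at which `u` and `s` are `E`-related. -/
noncomputable def nECount {k : ℕ} (E : A → A → Prop) (u s : Fin k → A) : ℕ :=
  {i : Fin k | E (u i) (s i)}.ncard

/-- A constant tuple. -/
def IsConstTuple {k : ℕ} (u : Fin k → A) : Prop := ∃ c, ∀ i, u i = c

/-- `h` maps any argument containing an `N`-pair to an `N`-pair and behaves like a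
minority on `{E,=}`. -/
def HMinority (E : A → A → Prop) (h : A → A → A → A) : Prop :=
  (∀ a₁ a₂ a₃ b₁ b₂ b₃ : A,
    (NRel E a₁ b₁ ∨ NRel E a₂ b₂ ∨ NRel E a₃ b₃) →
      NRel E (h a₁ a₂ a₃) (h b₁ b₂ b₃)) ∧
  (∀ a₁ a₂ a₃ b₁ b₂ b₃ : A,
    uu E a₁ b₁ → uu E a₂ b₂ → uu E a₃ b₃ →
      (E (h a₁ a₂ a₃) (h b₁ b₂ b₃) ↔
        ((E a₁ b₁ ∧ E a₂ b₂ ∧ E a₃ b₃) ∨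
         (E a₁ b₁ ∧ ¬ E a₂ b₂ ∧ ¬ E a₃ b₃) ∨
         (¬ E a₁ b₁ ∧ E a₂ b₂ ∧ ¬ E a₃ b₃) ∨
         (¬ E a₁ b₁ ∧ ¬ E a₂ b₂ ∧ E a₃ b₃))))

/-- `(u,s)` is an `{E,N}`-connected constant-injective pair: `u` is constant,
`s` is injective, no entry of `s` equals the value of `u`, and every coordinate
pair is in `E ∪ N`. -/
def ENConnCI {k : ℕ} (E : A → A → Prop) (u s : Fin k → A) : Prop :=
  IsConstTuple u ∧ Function.Injective s ∧ (∀ i j, s i ≠ u j) ∧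
  (∀ i, E (u i) (s i) ∨ NRel E (u i) (s i))
section Helpers

variable {A : Type u}

lemma e_symm {E : A → A → Prop} (hG : IsSimpleGraph E) {a b : A} (h : E a b) : E b a :=
  hG.1 a b h

lemma e_ne {E : A → A → Prop} (hG : IsSimpleGraph E) {a b : A} (h : E a b) : a ≠ b := by
  rintro rfl; exact hG.2 a h

lemma nrel_symm {E : A → A → Prop} (hG : IsSimpleGraph E) {a b : A} (h : NRel E a b) :
    NRel E b a := ⟨h.1.symm, fun he => h.2 (hG.1 _ _ he)⟩

/-- Extension property with avoidance of a finite set `D`. -/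
lemma rich_ext {E : A → A → Prop} (hG : IsSimpleGraph E) (hext : ExtensionProperty E)
    (U U' D : Finset A) (hUU' : ∀ a ∈ U, a ∉ U') :
    ∃ v, (v ∉ D ∧ ∀ a ∈ U', v ≠ a) ∧ (∀ u ∈ U, E v u) ∧ (∀ u ∈ U', ¬ E v u) := by
  classical
  obtain ⟨w, hw1, -⟩ := hext (U ∪ D ∪ U') ∅ (by simp)
  have hwU : w ∉ U := by
    intro h
    exact hG.2 w (hw1 w (by simp [h]))
  obtain ⟨v, hv1, hv2⟩ := hext U (insert w U') (by
    rw [Finset.disjoint_insert_right]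
    exact ⟨hwU, Finset.disjoint_left.mpr hUU'⟩)
  have hvw : ¬ E v w := hv2 w (Finset.mem_insert_self _ _)
  refine ⟨v, ⟨?_, ?_⟩, hv1, fun u hu => hv2 u (Finset.mem_insert_of_mem hu)⟩
  · intro hvD
    exact hvw (hG.1 _ _ (hw1 v (by simp [hvD])))
  · intro a ha h
    apply hvw
    rw [h]
    exact hG.1 _ _ (hw1 a (by simp [ha]))

/-- Choose a single fresh vertex with prescribed adjacencies to a finite target set. -/
lemma fresh_one {E : A → A → Prop} (hG : IsSimpleGraph E) (hext : ExtensionProperty E)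
    (T D : Finset A) (P : A → Prop) :
    ∃ v, v ∉ D ∧ (∀ a ∈ T, v ≠ a) ∧ ∀ a ∈ T, (P a → E v a) ∧ (¬ P a → ¬ E v a) := by
  classical
  obtain ⟨v, ⟨hvD, hvU'⟩, hU, hU'⟩ := rich_ext hG hext (T.filter P)
    (T.filter (fun a => ¬ P a)) D (by
      intro a ha
      simp only [Finset.mem_filter] at ha ⊢
      tauto)
  refine ⟨v, hvD, ?_, ?_⟩
  · intro a ha
    by_cases hPa : P a
    · exact e_ne hG (hU a (Finset.mem_filter.2 ⟨ha, hPa⟩))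
    · exact hvU' a (Finset.mem_filter.2 ⟨ha, hPa⟩)
  · intro a ha
    exact ⟨fun h => hU a (Finset.mem_filter.2 ⟨ha, h⟩),
      fun h => hU' a (Finset.mem_filter.2 ⟨ha, h⟩)⟩

/-- Choose a fresh injective tuple with prescribed adjacencies. -/
lemma fresh_tuple {E : A → A → Prop} (hG : IsSimpleGraph E) (hext : ExtensionProperty E) :
    ∀ (n : ℕ) (T : Fin n → Finset A) (P : Fin n → A → Prop) (D : Finset A),
    ∃ v : Fin n → A, Function.Injective v ∧ (∀ i, v i ∉ D) ∧
      (∀ i, ∀ a ∈ T i, v i ≠ a) ∧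
      ∀ i, ∀ a ∈ T i, (P i a → E (v i) a) ∧ (¬ P i a → ¬ E (v i) a) := by
  classical
  intro n
  induction n with
  | zero =>
    intro T P D
    exact ⟨fun i => i.elim0, fun i => i.elim0, fun i => i.elim0, fun i => i.elim0,
      fun i => i.elim0⟩
  | succ n ih =>
    intro T P D
    obtain ⟨v', hinj', hD', hne', hpat'⟩ :=
      ih (fun i => T i.castSucc) (fun i => P i.castSucc) D
    obtain ⟨vl, hvlD, hvlne, hvlpat⟩ := fresh_one hG hext (T (Fin.last n))
      (D ∪ Finset.univ.image v') (P (Fin.last n))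
    refine ⟨Fin.snoc v' vl, ?_, ?_, ?_, ?_⟩
    · intro a b hab
      induction a using Fin.lastCases with
      | last =>
        induction b using Fin.lastCases with
        | last => rfl
        | cast b =>
          simp only [Fin.snoc_last, Fin.snoc_castSucc] at hab
          exact absurd (Finset.mem_union_right (α := A) D
            (Finset.mem_image.2 ⟨b, Finset.mem_univ _, hab.symm⟩)) hvlD
      | cast a =>
        induction b using Fin.lastCases with
        | last =>
          simp only [Fin.snoc_last, Fin.snoc_castSucc] at hab
          exact absurd (Finset.mem_union_right (α := A) D
            (Finset.mem_image.2 ⟨a, Finset.mem_univ _, hab⟩)) hvlD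
        | cast b =>
          simp only [Fin.snoc_castSucc] at hab
          exact congrArg Fin.castSucc (hinj' hab)
    · intro i
      induction i using Fin.lastCases with
      | last => simpa using fun h => hvlD (Finset.mem_union_left _ h)
      | cast i => simpa using hD' i
    · intro i
      induction i using Fin.lastCases with
      | last => simpa using hvlne
      | cast i => simpa using hne' i
    · intro i
      induction i using Fin.lastCases with
      | last => simpa using hvlpat
      | cast i => simpa using hpat' i

end Helpers
section Homog

variable {A : Type u}

/-- A finite partial isomorphism, encoded as a list of pairs. -/
def GoodL (E : A → A → Prop) (l : List (A × A)) : Prop :=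
  ∀ p ∈ l, ∀ q ∈ l, (p.1 = q.1 ↔ p.2 = q.2) ∧ (E p.1 q.1 ↔ E p.2 q.2)

lemma goodL_swap {E : A → A → Prop} {l : List (A × A)} (h : GoodL E l) :
    GoodL E (l.map Prod.swap) := by
  intro p hp q hq
  simp only [List.mem_map] at hp hq
  obtain ⟨p', hp', rfl⟩ := hp
  obtain ⟨q', hq', rfl⟩ := hq
  obtain ⟨h1, h2⟩ := h p' hp' q' hq'
  exact ⟨h1.symm, h2.symm⟩

lemma goodL_extend {E : A → A → Prop} (hG : IsSimpleGraph E) (hext : ExtensionProperty E)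
    {l : List (A × A)} (hl : GoodL E l) (a : A) : ∃ b, GoodL E ((a, b) :: l) := by
  classical
  by_cases hmem : ∃ p ∈ l, p.1 = a
  · obtain ⟨p, hp, hpa⟩ := hmem
    refine ⟨p.2, ?_⟩
    intro r hr q hq
    simp only [List.mem_cons] at hr hq
    rcases hr with rfl | hr <;> rcases hq with rfl | hq
    · exact ⟨by simp, iff_of_false (hG.2 _) (hG.2 _)⟩
    · have := hl p hp q hq
      rw [hpa] at this
      exact this
    · have := hl r hr p hp
      rw [hpa] at this
      exact ⟨⟨fun e => (this.1.1 e), fun e => this.1.2 e⟩, this.2⟩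
    · exact hl r hr q hq
  · push_neg at hmem
    obtain ⟨b, _, hbne, hbpat⟩ := fresh_one hG hext (l.toFinset.image Prod.snd) ∅
      (fun x => ∃ q ∈ l, q.2 = x ∧ E a q.1)
    have hsnd : ∀ q ∈ l, q.2 ∈ l.toFinset.image Prod.snd := by
      intro q hq
      exact Finset.mem_image.2 ⟨q, List.mem_toFinset.2 hq, rfl⟩
    have hbq : ∀ q ∈ l, (E a q.1 ↔ E b q.2) := by
      intro q hq
      constructor
      · intro h
        exact (hbpat _ (hsnd q hq)).1 ⟨q, hq, rfl, h⟩
      · intro h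
        by_contra hna
        refine (hbpat _ (hsnd q hq)).2 ?_ h
        rintro ⟨q', hq', he, hE⟩
        have := (hl q hq q' hq').1.2 he.symm
        rw [this] at hna
        exact hna hE
    have hbne' : ∀ q ∈ l, b ≠ q.2 := fun q hq => hbne _ (hsnd q hq)
    have hane : ∀ q ∈ l, a ≠ q.1 := fun q hq h => hmem q hq h.symm
    refine ⟨b, ?_⟩
    intro r hr q hq
    simp only [List.mem_cons] at hr hq
    rcases hr with rfl | hr <;> rcases hq with rfl | hq
    · exact ⟨by simp, iff_of_false (hG.2 _) (hG.2 _)⟩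
    · exact ⟨iff_of_false (hane q hq) (hbne' q hq), hbq q hq⟩
    · refine ⟨iff_of_false (fun h => hane r hr h.symm) (fun h => hbne' r hr h.symm), ?_⟩
      constructor
      · intro h
        exact hG.1 _ _ ((hbq r hr).1 (hG.1 _ _ h))
      · intro h
        exact hG.1 _ _ ((hbq r hr).2 (hG.1 _ _ h))
    · exact hl r hr q hq

lemma goodL_extend' {E : A → A → Prop} (hG : IsSimpleGraph E) (hext : ExtensionProperty E)
    {l : List (A × A)} (hl : GoodL E l) (b : A) : ∃ a, GoodL E ((a, b) :: l) := by
  obtain ⟨a, ha⟩ := goodL_extend hG hext (goodL_swap hl) b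
  refine ⟨a, ?_⟩
  have := goodL_swap ha
  simpa using this
section Chain

variable {A : Type u}

variable {E : A → A → Prop}

/-- The back-and-forth chain of partial isomorphisms. -/
noncomputable def chainL (hG : IsSimpleGraph E) (hext : ExtensionProperty E)
    (l₀ : List (A × A)) (h₀ : GoodL E l₀) (en : ℕ → A) :
    ℕ → {l : List (A × A) // GoodL E l}
  | 0 => ⟨l₀, h₀⟩
  | n + 1 =>
    let prev := chainL hG hext l₀ h₀ en n
    let l₁ : {l : List (A × A) // GoodL E l} :=
      ⟨(en n, (goodL_extend hG hext prev.2 (en n)).choose) :: prev.1,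
        (goodL_extend hG hext prev.2 (en n)).choose_spec⟩
    ⟨((goodL_extend' hG hext l₁.2 (en n)).choose, en n) :: l₁.1,
      (goodL_extend' hG hext l₁.2 (en n)).choose_spec⟩

lemma chainL_mono (hG : IsSimpleGraph E) (hext : ExtensionProperty E)
    (l₀ : List (A × A)) (h₀ : GoodL E l₀) (en : ℕ → A) {n n' : ℕ} (h : n ≤ n')
    {p : A × A} (hp : p ∈ (chainL hG hext l₀ h₀ en n).1) :
    p ∈ (chainL hG hext l₀ h₀ en n').1 := by
  induction n' with
  | zero =>
    have hn : n = 0 := Nat.le_zero.mp h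
    subst hn; exact hp
  | succ n' ih =>
    rcases Nat.lt_or_ge n (n' + 1) with h' | h'
    · have := ih (by omega)
      simp only [chainL, List.mem_cons]
      tauto
    · have : n = n' + 1 := by omega
      subst this
      exact hp

lemma chainL_zero_le (hG : IsSimpleGraph E) (hext : ExtensionProperty E)
    (l₀ : List (A × A)) (h₀ : GoodL E l₀) (en : ℕ → A) (n : ℕ)
    {p : A × A} (hp : p ∈ l₀) : p ∈ (chainL hG hext l₀ h₀ en n).1 :=
  chainL_mono hG hext l₀ h₀ en (Nat.zero_le n) hp

lemma chainL_tot_fwd (hG : IsSimpleGraph E) (hext : ExtensionProperty E)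
    (l₀ : List (A × A)) (h₀ : GoodL E l₀) (en : ℕ → A) (n : ℕ) :
    ∃ b, (en n, b) ∈ (chainL hG hext l₀ h₀ en (n + 1)).1 := by
  refine ⟨(goodL_extend hG hext (chainL hG hext l₀ h₀ en n).2 (en n)).choose, ?_⟩
  simp only [chainL, List.mem_cons]
  tauto

lemma chainL_tot_bwd (hG : IsSimpleGraph E) (hext : ExtensionProperty E)
    (l₀ : List (A × A)) (h₀ : GoodL E l₀) (en : ℕ → A) (n : ℕ) :
    ∃ a, (a, en n) ∈ (chainL hG hext l₀ h₀ en (n + 1)).1 := by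
  simp only [chainL]
  exact ⟨_, List.mem_cons_self⟩

lemma chainL_good₂ (hG : IsSimpleGraph E) (hext : ExtensionProperty E)
    (l₀ : List (A × A)) (h₀ : GoodL E l₀) (en : ℕ → A) {n n' : ℕ}
    {p q : A × A} (hp : p ∈ (chainL hG hext l₀ h₀ en n).1)
    (hq : q ∈ (chainL hG hext l₀ h₀ en n').1) :
    (p.1 = q.1 ↔ p.2 = q.2) ∧ (E p.1 q.1 ↔ E p.2 q.2) := by
  have hp' := chainL_mono hG hext l₀ h₀ en (Nat.le_max_left n n') hp
  have hq' := chainL_mono hG hext l₀ h₀ en (Nat.le_max_right n n') hq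
  exact (chainL hG hext l₀ h₀ en (max n n')).2 _ hp' _ hq'

/-- Homogeneity: any finite partial isomorphism extends to an automorphism. -/
lemma exists_auto [Countable A] [Infinite A] (hG : IsSimpleGraph E)
    (hext : ExtensionProperty E) {n : ℕ} (x y : Fin n → A)
    (hxinj : Function.Injective x) (hyne : ∀ i j, i ≠ j → y i ≠ y j)
    (hrel : ∀ i j, E (x i) (x j) ↔ E (y i) (y j)) :
    ∃ α : A ≃ A, IsGraphAuto E α ∧ ∀ i, α (x i) = y i := by
  classical
  obtain ⟨e⟩ : Nonempty (A ≃ ℕ) := nonempty_equiv_of_countable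
  set en : ℕ → A := fun n => e.symm n with hen
  set l₀ : List (A × A) := List.ofFn (fun i => (x i, y i)) with hl₀
  have h₀ : GoodL E l₀ := by
    intro p hp q hq
    rw [hl₀, List.mem_ofFn] at hp hq
    obtain ⟨i, rfl⟩ := hp
    obtain ⟨j, rfl⟩ := hq
    refine ⟨⟨fun h => ?_, fun h => ?_⟩, hrel i j⟩
    · simp only at h ⊢
      rw [hxinj h]
    · simp only at h ⊢
      by_contra hne
      exact hyne i j (fun e => hne (congrArg x e)) h
  have htotf : ∀ a : A, ∃ b, (a, b) ∈ (chainL hG hext l₀ h₀ en (e a + 1)).1 := by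
    intro a
    have := chainL_tot_fwd hG hext l₀ h₀ en (e a)
    simpa [hen] using this
  have htotb : ∀ b : A, ∃ a, (a, b) ∈ (chainL hG hext l₀ h₀ en (e b + 1)).1 := by
    intro b
    have := chainL_tot_bwd hG hext l₀ h₀ en (e b)
    simpa [hen] using this
  set F : A → A := fun a => (htotf a).choose with hF
  set G : A → A := fun b => (htotb b).choose with hG'
  have hmemF : ∀ a, (a, F a) ∈ (chainL hG hext l₀ h₀ en (e a + 1)).1 :=
    fun a => (htotf a).choose_spec
  have hmemG : ∀ b, (G b, b) ∈ (chainL hG hext l₀ h₀ en (e b + 1)).1 :=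
    fun b => (htotb b).choose_spec
  have huniq : ∀ {n n' : ℕ} {a b b'}, (a, b) ∈ (chainL hG hext l₀ h₀ en n).1 →
      (a, b') ∈ (chainL hG hext l₀ h₀ en n').1 → b = b' := by
    intro n n' a b b' h1 h2
    exact (chainL_good₂ hG hext l₀ h₀ en h1 h2).1.1 rfl
  have huniq' : ∀ {n n' : ℕ} {a a' b}, (a, b) ∈ (chainL hG hext l₀ h₀ en n).1 →
      (a', b) ∈ (chainL hG hext l₀ h₀ en n').1 → a = a' := by
    intro n n' a a' b h1 h2
    exact (chainL_good₂ hG hext l₀ h₀ en h1 h2).1.2 rfl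
  have hGF : ∀ a, G (F a) = a := by
    intro a
    exact huniq' (hmemG (F a)) (hmemF a)
  have hFG : ∀ b, F (G b) = b := by
    intro b
    exact huniq (hmemF (G b)) (hmemG b)
  refine ⟨⟨F, G, hGF, hFG⟩, ?_, ?_⟩
  · intro a b
    simp only [Equiv.coe_fn_mk]
    exact ((chainL_good₂ hG hext l₀ h₀ en (hmemF a) (hmemF b)).2).symm
  · intro i
    have hmem0 : (x i, y i) ∈ (chainL hG hext l₀ h₀ en 0).1 := by
      simp only [chainL, hl₀, List.mem_ofFn]
      exact ⟨i, rfl⟩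
    exact huniq (hmemF (x i)) hmem0

end Chain
section Packs

variable {A : Type u}

lemma inj_pack {n : ℕ} (x : Fin n → A) (h : ∀ i j, i ≠ j → x i ≠ x j) :
    Function.Injective x := fun i j hij => by
  by_contra hne
  exact h i j hne hij

lemma ne_pack3 (w : Fin 3 → A) (h01 : w 0 ≠ w 1) (h02 : w 0 ≠ w 2) (h12 : w 1 ≠ w 2) :
    ∀ i j, i ≠ j → w i ≠ w j := by
  intro i j hij
  fin_cases i <;> fin_cases j <;>
    first
      | exact absurd rfl hij
      | exact h01 | exact h02 | exact h12
      | exact h01.symm | exact h02.symm | exact h12.symm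

lemma ne_pack4 (w : Fin 4 → A) (h01 : w 0 ≠ w 1) (h02 : w 0 ≠ w 2) (h03 : w 0 ≠ w 3)
    (h12 : w 1 ≠ w 2) (h13 : w 1 ≠ w 3) (h23 : w 2 ≠ w 3) :
    ∀ i j, i ≠ j → w i ≠ w j := by
  intro i j hij
  fin_cases i <;> fin_cases j <;>
    first
      | exact absurd rfl hij
      | exact h01 | exact h02 | exact h03 | exact h12 | exact h13 | exact h23
      | exact h01.symm | exact h02.symm | exact h03.symm
      | exact h12.symm | exact h13.symm | exact h23.symm

lemma rel_pack3 {E : A → A → Prop} (hG : IsSimpleGraph E) (x w : Fin 3 → A)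
    (h01 : E (x 0) (x 1) ↔ E (w 0) (w 1)) (h02 : E (x 0) (x 2) ↔ E (w 0) (w 2))
    (h12 : E (x 1) (x 2) ↔ E (w 1) (w 2)) :
    ∀ i j, E (x i) (x j) ↔ E (w i) (w j) := by
  have symm : ∀ a b c d : A, (E a b ↔ E c d) → (E b a ↔ E d c) := fun a b c d h =>
    ⟨fun e => hG.1 _ _ (h.1 (hG.1 _ _ e)), fun e => hG.1 _ _ (h.2 (hG.1 _ _ e))⟩
  have diag : ∀ a b : A, E a a ↔ E b b := fun a b => iff_of_false (hG.2 a) (hG.2 b)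
  intro i j
  fin_cases i <;> fin_cases j <;>
    first
      | exact diag _ _
      | exact h01 | exact h02 | exact h12
      | exact symm _ _ _ _ h01 | exact symm _ _ _ _ h02 | exact symm _ _ _ _ h12

lemma rel_pack4 {E : A → A → Prop} (hG : IsSimpleGraph E) (x w : Fin 4 → A)
    (h01 : E (x 0) (x 1) ↔ E (w 0) (w 1)) (h02 : E (x 0) (x 2) ↔ E (w 0) (w 2))
    (h03 : E (x 0) (x 3) ↔ E (w 0) (w 3)) (h12 : E (x 1) (x 2) ↔ E (w 1) (w 2))
    (h13 : E (x 1) (x 3) ↔ E (w 1) (w 3)) (h23 : E (x 2) (x 3) ↔ E (w 2) (w 3)) :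
    ∀ i j, E (x i) (x j) ↔ E (w i) (w j) := by
  have symm : ∀ a b c d : A, (E a b ↔ E c d) → (E b a ↔ E d c) := fun a b c d h =>
    ⟨fun e => hG.1 _ _ (h.1 (hG.1 _ _ e)), fun e => hG.1 _ _ (h.2 (hG.1 _ _ e))⟩
  have diag : ∀ a b : A, E a a ↔ E b b := fun a b => iff_of_false (hG.2 a) (hG.2 b)
  intro i j
  fin_cases i <;> fin_cases j <;>
    first
      | exact diag _ _
      | exact h01 | exact h02 | exact h03 | exact h12 | exact h13 | exact h23
      | exact symm _ _ _ _ h01 | exact symm _ _ _ _ h02 | exact symm _ _ _ _ h03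
      | exact symm _ _ _ _ h12 | exact symm _ _ _ _ h13 | exact symm _ _ _ _ h23

open scoped Classical in
lemma nECount_eq {k : ℕ} (E : A → A → Prop) (u s : Fin k → A) :
    nECount E u s = (Finset.univ.filter fun i => E (u i) (s i)).card := by
  rw [nECount, ← Set.ncard_coe_finset]
  congr 1
  ext i
  simp

lemma filter_card_of_iff {k : ℕ} {P Q : Fin k → Prop} [DecidablePred P] [DecidablePred Q]
    (j : Fin k) (bb : Bool)
    (h : ∀ i, P i ↔ ((i = j ∧ bb = true) ∨ (i ≠ j ∧ Q i))) :
    (Finset.univ.filter P).card =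
      ((Finset.univ.filter Q).erase j).card + (if bb then 1 else 0) := by
  classical
  have hset : Finset.univ.filter P =
      if bb then insert j ((Finset.univ.filter Q).erase j)
      else (Finset.univ.filter Q).erase j := by
    ext i
    simp only [Finset.mem_filter, Finset.mem_univ, true_and, h i]
    cases bb <;> by_cases hij : i = j <;>
      simp [hij, Finset.mem_erase, Finset.mem_insert, Finset.mem_filter] <;> tauto
  rw [hset]
  cases bb <;>
    simp [Finset.card_insert_of_notMem, Finset.notMem_erase]

lemma choose_j_bb {k m : ℕ} (hk : 1 ≤ k) (hm1 : 1 ≤ m) (hmk : m ≤ k) (S : Finset (Fin k))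
    (hS : S.card = k - m ∨ S.card = k - m + 1) :
    ∃ (j : Fin k) (bb : Bool),
      (((Finset.univ \ S).erase j).card + (if bb then 1 else 0) = m) := by
  classical
  have hcards : (Finset.univ \ S).card = k - S.card := by
    rw [Finset.card_sdiff_of_subset (Finset.subset_univ S)]
    simp
  by_cases hne : S.Nonempty
  · obtain ⟨j, hj⟩ := hne
    have hjer : (Finset.univ \ S).erase j = Finset.univ \ S := by
      apply Finset.erase_eq_of_notMem
      simp [hj]
    rcases hS with h | h
    · exact ⟨j, false, by rw [hjer, hcards, h]; simp; omega⟩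
    · exact ⟨j, true, by rw [hjer, hcards, h]; simp; omega⟩
  · have hS0 : S.card = 0 := by
      simp [Finset.not_nonempty_iff_eq_empty.mp hne]
    have hmk' : m = k := by omega
    refine ⟨⟨0, by omega⟩, true, ?_⟩
    have hj : (⟨0, by omega⟩ : Fin k) ∈ Finset.univ \ S := by
      simp [Finset.not_nonempty_iff_eq_empty.mp hne]
    rw [Finset.card_erase_of_mem hj, hcards, hS0]
    simp
    omega

lemma filter_neg_card {k : ℕ} {P : Fin k → Prop} [DecidablePred P] :
    (Finset.univ.filter fun i => ¬ P i).card = k - (Finset.univ.filter P).card := by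
  have := Finset.card_filter_add_card_filter_not (s := (Finset.univ : Finset (Fin k)))
    (p := P)
  simp only [Finset.card_univ, Fintype.card_fin] at this
  omega

end Packs
section Master

variable {A : Type u}

set_option maxHeartbeats 1000000 in
open scoped Classical in
lemma master {k : ℕ} (E : A → A → Prop) (hG : IsSimpleGraph E)
    [Countable A] [Infinite A] (hext : ExtensionProperty E) (hk : 3 ≤ k)
    (f : (Fin k → A) → A) (hqnu : IsQnu f)
    (hfNe : PreservesRel f (fun a b => a ≠ b))
    (R : Set (Fin 4 → A)) (hpres : Preserves f R) (hinv : AutoInvariant E R)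
    (hR : ((∃ t ∈ R, IsOP E (NRel E) t ∧ t 1 = t 2) ∧
           (∃ t' ∈ R, IsOP (NRel E) E t' ∧ t' 1 = t' 2)) ∨
          ((∃ t ∈ R, IsOP E (NRel E) t ∧ Function.Injective t) ∧
           (∃ t' ∈ R, IsOP (NRel E) E t' ∧ Function.Injective t')))
    (m : ℕ) (hm1 : 1 ≤ m) (hmk : m ≤ k)
    (V W : A → A → Prop)
    (hVsymm : ∀ a b, V a b → V b a)
    (hWne : ∀ a b : A, a ≠ b → ¬ V a b → W a b)
    (hVne : ∀ a b : A, a ≠ b → ¬ W a b → V a b)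
    (hnoV : ¬ ∃ t ∈ R, IsOP V V t)
    (hnoW : ¬ ∃ t ∈ R, IsOP W W t)
    (hH : ∀ u s : Fin k → A, ENConnCI E u s → nECount E u s = m → V (f u) (f s)) :
    ∀ u s : Fin k → A, ENConnCI E u s →
      (nECount E u s = k - m ∨ nECount E u s = k - m + 1) → W (f u) (f s) := by
  have hnoV' : ∀ ψ : Fin 4 → A, ψ ∈ R → V (ψ 0) (ψ 1) → ¬ V (ψ 2) (ψ 3) :=
    fun ψ hψ h1 h2 => hnoV ⟨ψ, hψ, h1, h2⟩
  have hnoW' : ∀ ψ : Fin 4 → A, ψ ∈ R → W (ψ 2) (ψ 3) → ¬ W (ψ 0) (ψ 1) :=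
    fun ψ hψ h2 h0 => hnoW ⟨ψ, hψ, h0, h2⟩
  -- applying the hypothesis `hH` to a constant-injective pair with a deviation pattern
  have hHapp : ∀ (d : A) (vv : Fin k → A), Function.Injective vv → (∀ i, vv i ≠ d) →
      ∀ (Z : Fin k → Prop) (j : Fin k) (bb : Bool),
      (∀ i, E d (vv i) ↔ ((i = j ∧ bb = true) ∨ (i ≠ j ∧ ¬ Z i))) →
      (((Finset.univ \ (Finset.univ.filter Z)).erase j).card + (if bb then 1 else 0) = m) →
      V (f (fun _ => d)) (f vv) := by
    intro d vv hinj hne Z j bb hiff hcard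
    apply hH
    · refine ⟨⟨d, fun _ => rfl⟩, hinj, fun i j' => hne i, fun i => ?_⟩
      by_cases h : E d (vv i)
      · exact Or.inl h
      · exact Or.inr ⟨Ne.symm (hne i), h⟩
    · rw [nECount_eq]
      have h1 : (Finset.univ.filter fun i => E ((fun _ => d) i) (vv i)).card =
          ((Finset.univ.filter fun i => ¬ Z i).erase j).card + (if bb then 1 else 0) :=
        filter_card_of_iff j bb hiff
      rw [h1, Finset.filter_not]
      exact hcard
  intro u s hCI hlev
  obtain ⟨⟨c, hc⟩, hsinj, hsu, hEN⟩ := hCI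
  have hu : u = fun _ => c := funext hc
  subst hu
  have hsc : ∀ i, s i ≠ c := fun i => hsu i i
  have hfus : f (fun _ => c) ≠ f s := hfNe _ _ (fun i => Ne.symm (hsc i))
  -- the level in terms of a filter
  have hlevf : (Finset.univ.filter fun i => E c (s i)).card = k - m ∨
      (Finset.univ.filter fun i => E c (s i)).card = k - m + 1 := by
    rwa [nECount_eq] at hlev
  obtain ⟨j, bb, hjbb⟩ := choose_j_bb (by omega) hm1 hmk _ hlevf
  rcases hR with ⟨⟨t, htR, ⟨htE, htN⟩, ht12⟩, ⟨t', ht'R, ⟨ht'N, ht'E⟩, ht'12⟩⟩ |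
      ⟨⟨t, htR, ⟨htE, htN⟩, htinj⟩, ⟨t', ht'R, ⟨ht'N, ht'E⟩, ht'inj⟩⟩
  · -- CASE (a): templates with a repeated middle vertex
    -- basic facts about the templates
    have h_t13 : ¬ E (t 1) (t 3) := by rw [ht12]; exact htN.2
    have h_t13ne : t 1 ≠ t 3 := by rw [ht12]; exact htN.1
    have h_t01ne : t 0 ≠ t 1 := e_ne hG htE
    have h_t03ne : t 0 ≠ t 3 := by
      intro h
      exact h_t13 (hG.1 _ _ (h ▸ htE))
    have h_t'13 : E (t' 1) (t' 3) := by rw [ht'12]; exact ht'E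
    have h_t'01ne : t' 0 ≠ t' 1 := ht'N.1
    have h_t'13ne : t' 1 ≠ t' 3 := e_ne hG h_t'13
    have h_t'03ne : t' 0 ≠ t' 3 := by
      intro h
      exact ht'N.2 (hG.1 _ _ (h ▸ h_t'13))
    -- choose the fresh tuple p
    obtain ⟨p, hpinj, hpD, hpne, hppat⟩ := fresh_tuple hG hext k
      (fun i => insert c {s i})
      (fun i a => (a = c ∧ ((i = j ∧ bb = true) ∨ (i ≠ j ∧ ¬ E c (s i)))) ∨
        (a = s i ∧ (if i = j then E (t 0) (t 3)
          else if E c (s i) then E (t' 0) (t' 3) else E (t 0) (t 3))))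
      (insert c (Finset.univ.image s))
    have hpc : ∀ i, p i ≠ c := fun i => hpne i c (by simp)
    have hps : ∀ i i', p i ≠ s i' := fun i i' h => (hpD i) (by
      rw [h]; exact Finset.mem_insert_of_mem (Finset.mem_image.2 ⟨i', Finset.mem_univ _, rfl⟩))
    have hpEc : ∀ i, E (p i) c ↔ ((i = j ∧ bb = true) ∨ (i ≠ j ∧ ¬ E c (s i))) := by
      intro i
      have h := hppat i c (by simp)
      constructor
      · intro hE
        by_contra hcon
        refine h.2 ?_ hE
        rintro (⟨-, h1⟩ | ⟨h1, -⟩)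
        · exact hcon h1
        · exact (hsc i) h1.symm
      · intro hcond
        exact h.1 (Or.inl ⟨rfl, hcond⟩)
    have hpEs : ∀ i, E (p i) (s i) ↔
        (if i = j then E (t 0) (t 3)
          else if E c (s i) then E (t' 0) (t' 3) else E (t 0) (t 3)) := by
      intro i
      have h := hppat i (s i) (by simp)
      constructor
      · intro hE
        by_contra hcon
        refine h.2 ?_ hE
        rintro (⟨h1, -⟩ | ⟨-, h1⟩)
        · exact (hsc i) h1
        · exact hcon h1
      · intro hcond
        exact h.1 (Or.inr ⟨rfl, hcond⟩)
    -- choose the fresh vertex yy for the deviation row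
    obtain ⟨yy, hyyD, hyyne, hyypat⟩ := fresh_one hG hext
      (insert c (insert (p j) {s j})) ∅ (fun a => a = p j)
    have hyyp : E yy (p j) := (hyypat (p j) (by simp)).1 rfl
    have hyys : ¬ E yy (s j) := (hyypat (s j) (by simp)).2 (by
      intro h; exact (hps j j) h.symm)
    have hyysne : yy ≠ s j := hyyne (s j) (by simp)
    have hyypne : yy ≠ p j := hyyne (p j) (by simp)
    -- rows
    have hrow : ∀ i, ∃ rw, rw ∈ R ∧ rw 0 = p i ∧
        rw 1 = (if i = j then yy else c) ∧ rw 2 = (if i = j then yy else c) ∧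
        rw 3 = s i := by
      intro i
      by_cases hij : i = j
      · subst hij
        obtain ⟨α, hα, hαx⟩ := exists_auto hG hext (n := 3) ![t 0, t 1, t 3] ![p i, yy, s i]
          (inj_pack _ (ne_pack3 _ h_t01ne h_t03ne h_t13ne))
          (ne_pack3 _ (Ne.symm hyypne) (hps i i) hyysne)
          (rel_pack3 hG _ _
            (iff_of_true htE (hG.1 _ _ hyyp))
            (by
              have h := hpEs i
              rw [if_pos rfl] at h
              show E (t 0) (t 3) ↔ E (p i) (s i)
              exact h.symm)
            (by
              show E (t 1) (t 3) ↔ E yy (s i)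
              exact iff_of_false h_t13 hyys))
        refine ⟨fun pos => α (t pos), hinv α hα t htR, ?_, ?_, ?_, ?_⟩
        · simpa using hαx 0
        · simpa using hαx 1
        · show α (t 2) = if i = i then yy else c
          rw [if_pos rfl, ← ht12]
          simpa using hαx 1
        · simpa using hαx 2
      · rw [if_neg hij]
        by_cases hcs : E c (s i)
        · -- template t'
          obtain ⟨α, hα, hαx⟩ := exists_auto hG hext (n := 3) ![t' 0, t' 1, t' 3]
            ![p i, c, s i]
            (inj_pack _ (ne_pack3 _ h_t'01ne h_t'03ne h_t'13ne))
            (ne_pack3 _ (hpc i) (hps i i) (Ne.symm (hsc i)))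
            (rel_pack3 hG _ _
              (by
                show E (t' 0) (t' 1) ↔ E (p i) c
                refine iff_of_false ht'N.2 ?_
                rw [hpEc i]
                rintro (⟨h1, -⟩ | ⟨-, h1⟩)
                · exact hij h1
                · exact h1 hcs)
              (by
                have h := hpEs i
                rw [if_neg hij, if_pos hcs] at h
                show E (t' 0) (t' 3) ↔ E (p i) (s i)
                exact h.symm)
              (by
                show E (t' 1) (t' 3) ↔ E c (s i)
                exact iff_of_true h_t'13 hcs))
          refine ⟨fun pos => α (t' pos), hinv α hα t' ht'R, ?_, ?_, ?_, ?_⟩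
          · simpa using hαx 0
          · simpa using hαx 1
          · show α (t' 2) = c
            rw [← ht'12]
            simpa using hαx 1
          · simpa using hαx 2
        · -- template t
          obtain ⟨α, hα, hαx⟩ := exists_auto hG hext (n := 3) ![t 0, t 1, t 3]
            ![p i, c, s i]
            (inj_pack _ (ne_pack3 _ h_t01ne h_t03ne h_t13ne))
            (ne_pack3 _ (hpc i) (hps i i) (Ne.symm (hsc i)))
            (rel_pack3 hG _ _
              (iff_of_true htE ((hpEc i).2 (Or.inr ⟨hij, hcs⟩)))
              (by
                have h := hpEs i
                rw [if_neg hij, if_neg hcs] at h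
                show E (t 0) (t 3) ↔ E (p i) (s i)
                exact h.symm)
              (by
                show E (t 1) (t 3) ↔ E c (s i)
                exact iff_of_false h_t13 hcs))
          refine ⟨fun pos => α (t pos), hinv α hα t htR, ?_, ?_, ?_, ?_⟩
          · simpa using hαx 0
          · simpa using hαx 1
          · show α (t 2) = c
            rw [← ht12]
            simpa using hαx 1
          · simpa using hαx 2
    choose rw hrwR hrw0 hrw1 hrw2 hrw3 using hrow
    have hψR : (fun q => f (fun i => rw i q)) ∈ R := hpres rw hrwR
    set ψ : Fin 4 → A := fun q => f (fun i => rw i q) with hψ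
    have hψ0 : ψ 0 = f p := by
      simp only [hψ]
      congr 1
      funext i
      exact hrw0 i
    have hcol12 : ∀ q, q = 1 ∨ q = 2 → (fun i => rw i q) = Function.update (fun _ => c) j yy := by
      rintro q (rfl | rfl) <;>
      · funext i
        rw [Function.update_apply]
        first
          | exact (hrw1 i).trans (by by_cases h : i = j <;> simp [h])
          | exact (hrw2 i).trans (by by_cases h : i = j <;> simp [h])
    have hψ1 : ψ 1 = f (fun _ => c) := by
      simp only [hψ]
      rw [hcol12 1 (Or.inl rfl)]
      exact hqnu c yy j
    have hψ2 : ψ 2 = f (fun _ => c) := by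
      simp only [hψ]
      rw [hcol12 2 (Or.inr rfl)]
      exact hqnu c yy j
    have hψ3 : ψ 3 = f s := by
      simp only [hψ]
      congr 1
      funext i
      exact hrw3 i
    -- apply the hypothesis H
    have hV01 : V (f (fun _ => c)) (f p) := by
      apply hHapp c p hpinj hpc (fun i => E c (s i)) j bb
      · intro i
        constructor
        · intro h
          exact (hpEc i).1 (hG.1 _ _ h)
        · intro h
          exact hG.1 _ _ ((hpEc i).2 h)
      · exact hjbb
    have hVψ : V (ψ 0) (ψ 1) := by
      rw [hψ0, hψ1]
      exact hVsymm _ _ hV01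
    have := hnoV' ψ hψR hVψ
    rw [hψ2, hψ3] at this
    exact hWne _ _ hfus this
  · -- CASE (b): injective templates
    -- basic distinctness facts for the injective templates
    have h_tne : ∀ i1 i2, i1 ≠ i2 → t i1 ≠ t i2 := fun i1 i2 h12 h => h12 (htinj h)
    have h_t'ne : ∀ i1 i2, i1 ≠ i2 → t' i1 ≠ t' i2 := fun i1 i2 h12 h => h12 (ht'inj h)
    -- FACT A : injective disjoint pairs at level k-m or k-m+1 get W
    have factA : ∀ (y z : Fin k → A), Function.Injective y → Function.Injective z →
        (∀ i1 i2, y i1 ≠ z i2) →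
        ((Finset.univ.filter fun i => E (y i) (z i)).card = k - m ∨
         (Finset.univ.filter fun i => E (y i) (z i)).card = k - m + 1) →
        W (f y) (f z) := by
      intro y z hyinj hzinj hdisj hlevA
      obtain ⟨jA, bbA, hjbbA⟩ := choose_j_bb (by omega) hm1 hmk _ hlevA
      -- choose the vertex d
      obtain ⟨d, -, hdne, hdpat⟩ := fresh_one hG hext
        ((Finset.univ.image y) ∪ (Finset.univ.image z)) ∅
        (fun a => (∃ i1, i1 ≠ jA ∧ a = y i1 ∧
            (if E (y i1) (z i1) then E (t' 0) (t' 2) else E (t 0) (t 2))) ∨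
          (∃ i1, i1 ≠ jA ∧ a = z i1 ∧
            (if E (y i1) (z i1) then E (t' 0) (t' 3) else E (t 0) (t 3))))
      have hdy : ∀ i1, d ≠ y i1 := fun i1 => hdne _
        (Finset.mem_union_left _ (Finset.mem_image.2 ⟨i1, Finset.mem_univ _, rfl⟩))
      have hdz : ∀ i1, d ≠ z i1 := fun i1 => hdne _
        (Finset.mem_union_right _ (Finset.mem_image.2 ⟨i1, Finset.mem_univ _, rfl⟩))
      have hdEy : ∀ i1, i1 ≠ jA → (E d (y i1) ↔
          (if E (y i1) (z i1) then E (t' 0) (t' 2) else E (t 0) (t 2))) := by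
        intro i1 hi1
        have h := hdpat (y i1)
          (Finset.mem_union_left _ (Finset.mem_image.2 ⟨i1, Finset.mem_univ _, rfl⟩))
        constructor
        · intro hE
          by_contra hcon
          refine h.2 ?_ hE
          rintro (⟨i2, hi2, heq, hcond⟩ | ⟨i2, hi2, heq, hcond⟩)
          · rw [hyinj heq] at hcon; exact hcon hcond
          · exact hdisj i1 i2 heq
        · intro hcond
          exact h.1 (Or.inl ⟨i1, hi1, rfl, hcond⟩)
      have hdEz : ∀ i1, i1 ≠ jA → (E d (z i1) ↔
          (if E (y i1) (z i1) then E (t' 0) (t' 3) else E (t 0) (t 3))) := by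
        intro i1 hi1
        have h := hdpat (z i1)
          (Finset.mem_union_right _ (Finset.mem_image.2 ⟨i1, Finset.mem_univ _, rfl⟩))
        constructor
        · intro hE
          by_contra hcon
          refine h.2 ?_ hE
          rintro (⟨i2, hi2, heq, hcond⟩ | ⟨i2, hi2, heq, hcond⟩)
          · exact hdisj i2 i1 heq.symm
          · rw [hzinj heq] at hcon; exact hcon hcond
        · intro hcond
          exact h.1 (Or.inr ⟨i1, hi1, rfl, hcond⟩)
      -- choose the deviation vertex dh
      obtain ⟨dh, hdhD, hdhne, hdhpat⟩ := fresh_one hG hext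
        (insert (y jA) {z jA})
        (insert d ((Finset.univ.image y) ∪ (Finset.univ.image z)))
        (fun a => (a = y jA ∧ (if E (y jA) (z jA) then E (t' 0) (t' 2) else E (t 0) (t 2))) ∨
          (a = z jA ∧ (if E (y jA) (z jA) then E (t' 0) (t' 3) else E (t 0) (t 3))))
      have hdhd : dh ≠ d := fun h => hdhD (by simp [h])
      have hdhy : ∀ i1, dh ≠ y i1 := fun i1 h => hdhD (by
        rw [h]
        exact Finset.mem_insert_of_mem (Finset.mem_union_left _
          (Finset.mem_image.2 ⟨i1, Finset.mem_univ _, rfl⟩)))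
      have hdhz : ∀ i1, dh ≠ z i1 := fun i1 h => hdhD (by
        rw [h]
        exact Finset.mem_insert_of_mem (Finset.mem_union_right _
          (Finset.mem_image.2 ⟨i1, Finset.mem_univ _, rfl⟩)))
      have hyzj : y jA ≠ z jA := hdisj jA jA
      have hdhEy : E dh (y jA) ↔
          (if E (y jA) (z jA) then E (t' 0) (t' 2) else E (t 0) (t 2)) := by
        have h := hdhpat (y jA) (by simp)
        constructor
        · intro hE
          by_contra hcon
          refine h.2 ?_ hE
          rintro (⟨-, hcond⟩ | ⟨heq, -⟩)
          · exact hcon hcond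
          · exact hyzj heq
        · intro hcond
          exact h.1 (Or.inl ⟨rfl, hcond⟩)
      have hdhEz : E dh (z jA) ↔
          (if E (y jA) (z jA) then E (t' 0) (t' 3) else E (t 0) (t 3)) := by
        have h := hdhpat (z jA) (by simp)
        constructor
        · intro hE
          by_contra hcon
          refine h.2 ?_ hE
          rintro (⟨heq, -⟩ | ⟨-, hcond⟩)
          · exact hyzj heq.symm
          · exact hcon hcond
        · intro hcond
          exact h.1 (Or.inr ⟨rfl, hcond⟩)
      -- choose the injective tuple v
      obtain ⟨v, hvinj, hvD, hvne, hvpat⟩ := fresh_tuple hG hext k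
        (fun i => insert d (insert dh (insert (y i) {z i})))
        (fun i a =>
          (a = d ∧ ((i = jA ∧ bbA = true) ∨ (i ≠ jA ∧ ¬ E (y i) (z i)))) ∨
          (a = dh ∧ i = jA ∧
            (if E (y jA) (z jA) then E (t' 0) (t' 1) else E (t 0) (t 1))) ∨
          (a = y i ∧ (if E (y i) (z i) then E (t' 1) (t' 2) else E (t 1) (t 2))) ∨
          (a = z i ∧ (if E (y i) (z i) then E (t' 1) (t' 3) else E (t 1) (t 3))))
        (insert d (insert dh ((Finset.univ.image y) ∪ (Finset.univ.image z))))
      have hvd : ∀ i, v i ≠ d := fun i => hvne i d (by simp)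
      have hvdh : ∀ i, v i ≠ dh := fun i => hvne i dh (by simp)
      have hvy : ∀ i, v i ≠ y i := fun i => hvne i (y i) (by simp)
      have hvz : ∀ i, v i ≠ z i := fun i => hvne i (z i) (by simp)
      have hvEd : ∀ i, E (v i) d ↔ ((i = jA ∧ bbA = true) ∨ (i ≠ jA ∧ ¬ E (y i) (z i))) := by
        intro i
        have h := hvpat i d (by simp)
        constructor
        · intro hE
          by_contra hcon
          refine (h.2 ?_) hE
          rintro (⟨-, hcond⟩ | ⟨heq, -⟩ | ⟨heq, -⟩ | ⟨heq, -⟩)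
          · exact hcon hcond
          · exact hdhd heq.symm
          · exact hdy i heq
          · exact hdz i heq
        · intro hcond
          exact h.1 (Or.inl ⟨rfl, hcond⟩)
      have hvEdh : ∀ i, E (v i) dh ↔ (i = jA ∧
          (if E (y jA) (z jA) then E (t' 0) (t' 1) else E (t 0) (t 1))) := by
        intro i
        have h := hvpat i dh (by simp)
        constructor
        · intro hE
          by_contra hcon
          refine (h.2 ?_) hE
          rintro (⟨heq, -⟩ | ⟨-, hcond⟩ | ⟨heq, -⟩ | ⟨heq, -⟩)
          · exact hdhd heq
          · exact hcon hcond
          · exact hdhy i heq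
          · exact hdhz i heq
        · intro hcond
          exact h.1 (Or.inr (Or.inl ⟨rfl, hcond⟩))
      have hvEy : ∀ i, E (v i) (y i) ↔
          (if E (y i) (z i) then E (t' 1) (t' 2) else E (t 1) (t 2)) := by
        intro i
        have h := hvpat i (y i) (by simp)
        constructor
        · intro hE
          by_contra hcon
          refine (h.2 ?_) hE
          rintro (⟨heq, -⟩ | ⟨heq, -⟩ | ⟨-, hcond⟩ | ⟨heq, -⟩)
          · exact hdy i heq.symm
          · exact hdhy i heq.symm
          · exact hcon hcond
          · exact hdisj i i heq
        · intro hcond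
          exact h.1 (Or.inr (Or.inr (Or.inl ⟨rfl, hcond⟩)))
      have hvEz : ∀ i, E (v i) (z i) ↔
          (if E (y i) (z i) then E (t' 1) (t' 3) else E (t 1) (t 3)) := by
        intro i
        have h := hvpat i (z i) (by simp)
        constructor
        · intro hE
          by_contra hcon
          refine (h.2 ?_) hE
          rintro (⟨heq, -⟩ | ⟨heq, -⟩ | ⟨heq, -⟩ | ⟨-, hcond⟩)
          · exact hdz i heq.symm
          · exact hdhz i heq.symm
          · exact hdisj i i heq.symm
          · exact hcon hcond
        · intro hcond
          exact h.1 (Or.inr (Or.inr (Or.inr ⟨rfl, hcond⟩)))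
      -- the rows
      have hrow : ∀ i, ∃ rw, rw ∈ R ∧ rw 0 = (if i = jA then dh else d) ∧
          rw 1 = v i ∧ rw 2 = y i ∧ rw 3 = z i := by
        intro i
        by_cases hcs : E (y i) (z i)
        · -- template t'
          by_cases hij : i = jA
          · subst hij
            obtain ⟨α, hα, hαx⟩ := exists_auto hG hext (n := 4) t' ![dh, v i, y i, z i]
              ht'inj
              (ne_pack4 _ (Ne.symm (hvdh i)) (hdhy i) (hdhz i) (hvy i) (hvz i) (hdisj i i))
              (rel_pack4 hG _ _
                (by
                  show E (t' 0) (t' 1) ↔ E dh (v i)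
                  have h := hvEdh i
                  rw [if_pos hcs] at h
                  constructor
                  · intro hE
                    exact hG.1 _ _ (h.2 ⟨rfl, hE⟩)
                  · intro hE
                    exact (h.1 (hG.1 _ _ hE)).2)
                (by
                  show E (t' 0) (t' 2) ↔ E dh (y i)
                  rw [hdhEy, if_pos hcs])
                (by
                  show E (t' 0) (t' 3) ↔ E dh (z i)
                  rw [hdhEz, if_pos hcs])
                (by
                  show E (t' 1) (t' 2) ↔ E (v i) (y i)
                  rw [hvEy, if_pos hcs])
                (by
                  show E (t' 1) (t' 3) ↔ E (v i) (z i)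
                  rw [hvEz, if_pos hcs])
                (by
                  show E (t' 2) (t' 3) ↔ E (y i) (z i)
                  exact iff_of_true ht'E hcs))
            refine ⟨fun pos => α (t' pos), hinv α hα t' ht'R, ?_, ?_, ?_, ?_⟩
            · rw [if_pos rfl]; simpa using hαx 0
            · simpa using hαx 1
            · simpa using hαx 2
            · simpa using hαx 3
          · obtain ⟨α, hα, hαx⟩ := exists_auto hG hext (n := 4) t' ![d, v i, y i, z i]
              ht'inj
              (ne_pack4 _ (Ne.symm (hvd i)) (hdy i) (hdz i) (hvy i) (hvz i) (hdisj i i))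
              (rel_pack4 hG _ _
                (by
                  show E (t' 0) (t' 1) ↔ E d (v i)
                  refine iff_of_false ht'N.2 (fun hE => ?_)
                  rcases (hvEd i).1 (hG.1 _ _ hE) with ⟨h1, -⟩ | ⟨-, h1⟩
                  · exact hij h1
                  · exact h1 hcs)
                (by
                  show E (t' 0) (t' 2) ↔ E d (y i)
                  rw [hdEy i hij, if_pos hcs])
                (by
                  show E (t' 0) (t' 3) ↔ E d (z i)
                  rw [hdEz i hij, if_pos hcs])
                (by
                  show E (t' 1) (t' 2) ↔ E (v i) (y i)
                  rw [hvEy, if_pos hcs])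
                (by
                  show E (t' 1) (t' 3) ↔ E (v i) (z i)
                  rw [hvEz, if_pos hcs])
                (by
                  show E (t' 2) (t' 3) ↔ E (y i) (z i)
                  exact iff_of_true ht'E hcs))
            refine ⟨fun pos => α (t' pos), hinv α hα t' ht'R, ?_, ?_, ?_, ?_⟩
            · rw [if_neg hij]; simpa using hαx 0
            · simpa using hαx 1
            · simpa using hαx 2
            · simpa using hαx 3
        · -- template t
          by_cases hij : i = jA
          · subst hij
            obtain ⟨α, hα, hαx⟩ := exists_auto hG hext (n := 4) t ![dh, v i, y i, z i]
              htinj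
              (ne_pack4 _ (Ne.symm (hvdh i)) (hdhy i) (hdhz i) (hvy i) (hvz i) (hdisj i i))
              (rel_pack4 hG _ _
                (by
                  show E (t 0) (t 1) ↔ E dh (v i)
                  have h := hvEdh i
                  rw [if_neg hcs] at h
                  constructor
                  · intro hE
                    exact hG.1 _ _ (h.2 ⟨rfl, hE⟩)
                  · intro hE
                    exact (h.1 (hG.1 _ _ hE)).2)
                (by
                  show E (t 0) (t 2) ↔ E dh (y i)
                  rw [hdhEy, if_neg hcs])
                (by
                  show E (t 0) (t 3) ↔ E dh (z i)
                  rw [hdhEz, if_neg hcs])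
                (by
                  show E (t 1) (t 2) ↔ E (v i) (y i)
                  rw [hvEy, if_neg hcs])
                (by
                  show E (t 1) (t 3) ↔ E (v i) (z i)
                  rw [hvEz, if_neg hcs])
                (by
                  show E (t 2) (t 3) ↔ E (y i) (z i)
                  exact iff_of_false htN.2 hcs))
            refine ⟨fun pos => α (t pos), hinv α hα t htR, ?_, ?_, ?_, ?_⟩
            · rw [if_pos rfl]; simpa using hαx 0
            · simpa using hαx 1
            · simpa using hαx 2
            · simpa using hαx 3
          · obtain ⟨α, hα, hαx⟩ := exists_auto hG hext (n := 4) t ![d, v i, y i, z i]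
              htinj
              (ne_pack4 _ (Ne.symm (hvd i)) (hdy i) (hdz i) (hvy i) (hvz i) (hdisj i i))
              (rel_pack4 hG _ _
                (by
                  show E (t 0) (t 1) ↔ E d (v i)
                  exact iff_of_true htE (hG.1 _ _ ((hvEd i).2 (Or.inr ⟨hij, hcs⟩))))
                (by
                  show E (t 0) (t 2) ↔ E d (y i)
                  rw [hdEy i hij, if_neg hcs])
                (by
                  show E (t 0) (t 3) ↔ E d (z i)
                  rw [hdEz i hij, if_neg hcs])
                (by
                  show E (t 1) (t 2) ↔ E (v i) (y i)
                  rw [hvEy, if_neg hcs])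
                (by
                  show E (t 1) (t 3) ↔ E (v i) (z i)
                  rw [hvEz, if_neg hcs])
                (by
                  show E (t 2) (t 3) ↔ E (y i) (z i)
                  exact iff_of_false htN.2 hcs))
            refine ⟨fun pos => α (t pos), hinv α hα t htR, ?_, ?_, ?_, ?_⟩
            · rw [if_neg hij]; simpa using hαx 0
            · simpa using hαx 1
            · simpa using hαx 2
            · simpa using hαx 3
      choose rwA hrwR hrw0 hrw1 hrw2 hrw3 using hrow
      have hψR : (fun q => f (fun i => rwA i q)) ∈ R := hpres rwA hrwR
      have hψ0 : (fun q => f (fun i => rwA i q)) 0 = f (fun _ => d) := by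
        show f (fun i => rwA i 0) = _
        have hcol0 : (fun i => rwA i 0) = Function.update (fun _ => d) jA dh := by
          funext i
          rw [Function.update_apply]
          exact hrw0 i
        rw [hcol0]
        exact hqnu d dh jA
      have hψ1 : (fun q => f (fun i => rwA i q)) 1 = f v := by
        show f (fun i => rwA i 1) = _
        congr 1
        funext i
        exact hrw1 i
      have hψ2 : (fun q => f (fun i => rwA i q)) 2 = f y := by
        show f (fun i => rwA i 2) = _
        congr 1
        funext i
        exact hrw2 i
      have hψ3 : (fun q => f (fun i => rwA i q)) 3 = f z := by
        show f (fun i => rwA i 3) = _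
        congr 1
        funext i
        exact hrw3 i
      have hV01 : V (f (fun _ => d)) (f v) := by
        apply hHapp d v hvinj hvd (fun i => E (y i) (z i)) jA bbA
        · intro i
          constructor
          · intro h
            exact (hvEd i).1 (hG.1 _ _ h)
          · intro h
            exact hG.1 _ _ ((hvEd i).2 h)
        · exact hjbbA
      have hnV23 := hnoV' (fun q => f (fun i => rwA i q)) hψR (by beta_reduce at hψ0 hψ1 ⊢; rw [hψ0, hψ1]; exact hV01)
      beta_reduce at hψ2 hψ3; rw [hψ2, hψ3] at hnV23
      exact hWne _ _ (hfNe y z (fun i => hdisj i i)) hnV23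
    -- FACT B : injective disjoint pairs at level m or m-1 get V
    have factB : ∀ (pp ww : Fin k → A), Function.Injective pp → Function.Injective ww →
        (∀ i1 i2, pp i1 ≠ ww i2) →
        ((Finset.univ.filter fun i => E (pp i) (ww i)).card = m ∨
         (Finset.univ.filter fun i => E (pp i) (ww i)).card = m - 1) →
        V (f pp) (f ww) := by
      intro pp ww hppinj hwwinj hdisj hlevB
      obtain ⟨ph, hphinj, hphD, hphne, hphpat⟩ := fresh_tuple hG hext k
        (fun i => insert (pp i) {ww i})
        (fun i a =>
          (a = pp i ∧ (if E (pp i) (ww i) then E (t 0) (t 2) else E (t' 0) (t' 2))) ∨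
          (a = ww i ∧ (if E (pp i) (ww i) then E (t 1) (t 2) else E (t' 1) (t' 2))))
        ((Finset.univ.image pp) ∪ (Finset.univ.image ww))
      have hphp : ∀ i1 i2, ph i1 ≠ pp i2 := fun i1 i2 h => (hphD i1) (by
        rw [h]
        exact Finset.mem_union_left _ (Finset.mem_image.2 ⟨i2, Finset.mem_univ _, rfl⟩))
      have hphw : ∀ i1 i2, ph i1 ≠ ww i2 := fun i1 i2 h => (hphD i1) (by
        rw [h]
        exact Finset.mem_union_right _ (Finset.mem_image.2 ⟨i2, Finset.mem_univ _, rfl⟩))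
      have hphEp : ∀ i, E (ph i) (pp i) ↔
          (if E (pp i) (ww i) then E (t 0) (t 2) else E (t' 0) (t' 2)) := by
        intro i
        have h := hphpat i (pp i) (by simp)
        constructor
        · intro hE
          by_contra hcon
          refine (h.2 ?_) hE
          rintro (⟨-, hcond⟩ | ⟨heq, -⟩)
          · exact hcon hcond
          · exact hdisj i i heq
        · intro hcond
          exact h.1 (Or.inl ⟨rfl, hcond⟩)
      have hphEw : ∀ i, E (ph i) (ww i) ↔
          (if E (pp i) (ww i) then E (t 1) (t 2) else E (t' 1) (t' 2)) := by
        intro i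
        have h := hphpat i (ww i) (by simp)
        constructor
        · intro hE
          by_contra hcon
          refine (h.2 ?_) hE
          rintro (⟨heq, -⟩ | ⟨-, hcond⟩)
          · exact hdisj i i heq.symm
          · exact hcon hcond
        · intro hcond
          exact h.1 (Or.inr ⟨rfl, hcond⟩)
      obtain ⟨wh, hwhinj, hwhD, hwhne, hwhpat⟩ := fresh_tuple hG hext k
        (fun i => insert (pp i) (insert (ww i) {ph i}))
        (fun i a =>
          (a = pp i ∧ (if E (pp i) (ww i) then E (t 0) (t 3) else E (t' 0) (t' 3))) ∨
          (a = ww i ∧ (if E (pp i) (ww i) then E (t 1) (t 3) else E (t' 1) (t' 3))) ∨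
          (a = ph i ∧ (if E (pp i) (ww i) then E (t 2) (t 3) else E (t' 2) (t' 3))))
        (((Finset.univ.image pp) ∪ (Finset.univ.image ww)) ∪ (Finset.univ.image ph))
      have hwhp : ∀ i1 i2, wh i1 ≠ pp i2 := fun i1 i2 h => (hwhD i1) (by
        rw [h]
        exact Finset.mem_union_left _ (Finset.mem_union_left _
          (Finset.mem_image.2 ⟨i2, Finset.mem_univ _, rfl⟩)))
      have hwhw : ∀ i1 i2, wh i1 ≠ ww i2 := fun i1 i2 h => (hwhD i1) (by
        rw [h]
        exact Finset.mem_union_left _ (Finset.mem_union_right _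
          (Finset.mem_image.2 ⟨i2, Finset.mem_univ _, rfl⟩)))
      have hwhph : ∀ i1 i2, wh i1 ≠ ph i2 := fun i1 i2 h => (hwhD i1) (by
        rw [h]
        exact Finset.mem_union_right _ (Finset.mem_image.2 ⟨i2, Finset.mem_univ _, rfl⟩))
      have hwhEp : ∀ i, E (wh i) (pp i) ↔
          (if E (pp i) (ww i) then E (t 0) (t 3) else E (t' 0) (t' 3)) := by
        intro i
        have h := hwhpat i (pp i) (by simp)
        constructor
        · intro hE
          by_contra hcon
          refine (h.2 ?_) hE
          rintro (⟨-, hcond⟩ | ⟨heq, -⟩ | ⟨heq, -⟩)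
          · exact hcon hcond
          · exact hdisj i i heq
          · exact hphp i i heq.symm
        · intro hcond
          exact h.1 (Or.inl ⟨rfl, hcond⟩)
      have hwhEw : ∀ i, E (wh i) (ww i) ↔
          (if E (pp i) (ww i) then E (t 1) (t 3) else E (t' 1) (t' 3)) := by
        intro i
        have h := hwhpat i (ww i) (by simp)
        constructor
        · intro hE
          by_contra hcon
          refine (h.2 ?_) hE
          rintro (⟨heq, -⟩ | ⟨-, hcond⟩ | ⟨heq, -⟩)
          · exact hdisj i i heq.symm
          · exact hcon hcond
          · exact hphw i i heq.symm
        · intro hcond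
          exact h.1 (Or.inr (Or.inl ⟨rfl, hcond⟩))
      have hwhEph : ∀ i, E (wh i) (ph i) ↔
          (if E (pp i) (ww i) then E (t 2) (t 3) else E (t' 2) (t' 3)) := by
        intro i
        have h := hwhpat i (ph i) (by simp)
        constructor
        · intro hE
          by_contra hcon
          refine (h.2 ?_) hE
          rintro (⟨heq, -⟩ | ⟨heq, -⟩ | ⟨-, hcond⟩)
          · exact hphp i i heq
          · exact hphw i i heq
          · exact hcon hcond
        · intro hcond
          exact h.1 (Or.inr (Or.inr ⟨rfl, hcond⟩))
      -- rows
      have hrow : ∀ i, ∃ rw, rw ∈ R ∧ rw 0 = pp i ∧ rw 1 = ww i ∧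
          rw 2 = ph i ∧ rw 3 = wh i := by
        intro i
        by_cases hcs : E (pp i) (ww i)
        · obtain ⟨α, hα, hαx⟩ := exists_auto hG hext (n := 4) t ![pp i, ww i, ph i, wh i]
            htinj
            (ne_pack4 _ (hdisj i i) (Ne.symm (hphp i i)) (Ne.symm (hwhp i i))
              (Ne.symm (hphw i i)) (Ne.symm (hwhw i i)) (Ne.symm (hwhph i i)))
            (rel_pack4 hG _ _
              (by
                show E (t 0) (t 1) ↔ E (pp i) (ww i)
                exact iff_of_true htE hcs)
              (by
                show E (t 0) (t 2) ↔ E (pp i) (ph i)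
                rw [show E (pp i) (ph i) ↔ E (ph i) (pp i) from
                  ⟨fun h => hG.1 _ _ h, fun h => hG.1 _ _ h⟩, hphEp, if_pos hcs])
              (by
                show E (t 0) (t 3) ↔ E (pp i) (wh i)
                rw [show E (pp i) (wh i) ↔ E (wh i) (pp i) from
                  ⟨fun h => hG.1 _ _ h, fun h => hG.1 _ _ h⟩, hwhEp, if_pos hcs])
              (by
                show E (t 1) (t 2) ↔ E (ww i) (ph i)
                rw [show E (ww i) (ph i) ↔ E (ph i) (ww i) from
                  ⟨fun h => hG.1 _ _ h, fun h => hG.1 _ _ h⟩, hphEw, if_pos hcs])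
              (by
                show E (t 1) (t 3) ↔ E (ww i) (wh i)
                rw [show E (ww i) (wh i) ↔ E (wh i) (ww i) from
                  ⟨fun h => hG.1 _ _ h, fun h => hG.1 _ _ h⟩, hwhEw, if_pos hcs])
              (by
                show E (t 2) (t 3) ↔ E (ph i) (wh i)
                rw [show E (ph i) (wh i) ↔ E (wh i) (ph i) from
                  ⟨fun h => hG.1 _ _ h, fun h => hG.1 _ _ h⟩, hwhEph, if_pos hcs]))
          refine ⟨fun pos => α (t pos), hinv α hα t htR, ?_, ?_, ?_, ?_⟩
          · simpa using hαx 0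
          · simpa using hαx 1
          · simpa using hαx 2
          · simpa using hαx 3
        · obtain ⟨α, hα, hαx⟩ := exists_auto hG hext (n := 4) t' ![pp i, ww i, ph i, wh i]
            ht'inj
            (ne_pack4 _ (hdisj i i) (Ne.symm (hphp i i)) (Ne.symm (hwhp i i))
              (Ne.symm (hphw i i)) (Ne.symm (hwhw i i)) (Ne.symm (hwhph i i)))
            (rel_pack4 hG _ _
              (by
                show E (t' 0) (t' 1) ↔ E (pp i) (ww i)
                exact iff_of_false ht'N.2 hcs)
              (by
                show E (t' 0) (t' 2) ↔ E (pp i) (ph i)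
                rw [show E (pp i) (ph i) ↔ E (ph i) (pp i) from
                  ⟨fun h => hG.1 _ _ h, fun h => hG.1 _ _ h⟩, hphEp, if_neg hcs])
              (by
                show E (t' 0) (t' 3) ↔ E (pp i) (wh i)
                rw [show E (pp i) (wh i) ↔ E (wh i) (pp i) from
                  ⟨fun h => hG.1 _ _ h, fun h => hG.1 _ _ h⟩, hwhEp, if_neg hcs])
              (by
                show E (t' 1) (t' 2) ↔ E (ww i) (ph i)
                rw [show E (ww i) (ph i) ↔ E (ph i) (ww i) from
                  ⟨fun h => hG.1 _ _ h, fun h => hG.1 _ _ h⟩, hphEw, if_neg hcs])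
              (by
                show E (t' 1) (t' 3) ↔ E (ww i) (wh i)
                rw [show E (ww i) (wh i) ↔ E (wh i) (ww i) from
                  ⟨fun h => hG.1 _ _ h, fun h => hG.1 _ _ h⟩, hwhEw, if_neg hcs])
              (by
                show E (t' 2) (t' 3) ↔ E (ph i) (wh i)
                rw [show E (ph i) (wh i) ↔ E (wh i) (ph i) from
                  ⟨fun h => hG.1 _ _ h, fun h => hG.1 _ _ h⟩, hwhEph, if_neg hcs]))
          refine ⟨fun pos => α (t' pos), hinv α hα t' ht'R, ?_, ?_, ?_, ?_⟩
          · simpa using hαx 0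
          · simpa using hαx 1
          · simpa using hαx 2
          · simpa using hαx 3
      choose rwB hrwR hrw0 hrw1 hrw2 hrw3 using hrow
      have hψR : (fun q => f (fun i => rwB i q)) ∈ R := hpres rwB hrwR
      have hψ0 : (fun q => f (fun i => rwB i q)) 0 = f pp := by
        show f (fun i => rwB i 0) = _
        congr 1
        funext i
        exact hrw0 i
      have hψ1 : (fun q => f (fun i => rwB i q)) 1 = f ww := by
        show f (fun i => rwB i 1) = _
        congr 1
        funext i
        exact hrw1 i
      have hψ2 : (fun q => f (fun i => rwB i q)) 2 = f ph := by
        show f (fun i => rwB i 2) = _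
        congr 1
        funext i
        exact hrw2 i
      have hψ3 : (fun q => f (fun i => rwB i q)) 3 = f wh := by
        show f (fun i => rwB i 3) = _
        congr 1
        funext i
        exact hrw3 i
      -- the fresh pair has complementary level
      have hlevph : (Finset.univ.filter fun i => E (ph i) (wh i)).card = k - m ∨
          (Finset.univ.filter fun i => E (ph i) (wh i)).card = k - m + 1 := by
        have hpt : ∀ i, E (ph i) (wh i) ↔ ¬ E (pp i) (ww i) := by
          intro i
          rw [show E (ph i) (wh i) ↔ E (wh i) (ph i) from
            ⟨fun h => hG.1 _ _ h, fun h => hG.1 _ _ h⟩, hwhEph]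
          by_cases hcs : E (pp i) (ww i)
          · rw [if_pos hcs]
            exact iff_of_false htN.2 (fun h => h hcs)
          · rw [if_neg hcs]
            exact iff_of_true ht'E hcs
        have hseteq : (Finset.univ.filter fun i => E (ph i) (wh i)) =
            (Finset.univ.filter fun i => ¬ E (pp i) (ww i)) := by
          refine Finset.filter_congr ?_
          intro i _
          exact hpt i
        rw [hseteq, filter_neg_card]
        rcases hlevB with h | h
        · left; omega
        · right; omega
      have hW23 : W (f ph) (f wh) := factA ph wh hphinj hwhinj
        (fun i1 i2 => Ne.symm (hwhph i2 i1)) hlevph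
      have hnW01 := hnoW' (fun q => f (fun i => rwB i q)) hψR (by beta_reduce at hψ2 hψ3 ⊢; rw [hψ2, hψ3]; exact hW23)
      beta_reduce at hψ0 hψ1; rw [hψ0, hψ1] at hnW01
      exact hVne _ _ (hfNe pp ww (fun i => hdisj i i)) hnW01
    -- the final build for the given pair (const c, s)
    obtain ⟨p, hpinj, hpD, hpne, hppat⟩ := fresh_tuple hG hext k
      (fun i => insert c {s i})
      (fun i a =>
        (a = c ∧ (if E c (s i) then E (t' 0) (t' 2) else E (t 0) (t 2))) ∨
        (a = s i ∧ (if E c (s i) then E (t' 0) (t' 3) else E (t 0) (t 3))))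
      (insert c (Finset.univ.image s))
    have hpc : ∀ i, p i ≠ c := fun i => hpne i c (by simp)
    have hps : ∀ i1 i2, p i1 ≠ s i2 := fun i1 i2 h => (hpD i1) (by
      rw [h]
      exact Finset.mem_insert_of_mem (Finset.mem_image.2 ⟨i2, Finset.mem_univ _, rfl⟩))
    have hpEc : ∀ i, E (p i) c ↔
        (if E c (s i) then E (t' 0) (t' 2) else E (t 0) (t 2)) := by
      intro i
      have h := hppat i c (by simp)
      constructor
      · intro hE
        by_contra hcon
        refine (h.2 ?_) hE
        rintro (⟨-, hcond⟩ | ⟨heq, -⟩)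
        · exact hcon hcond
        · exact hsc i heq.symm
      · intro hcond
        exact h.1 (Or.inl ⟨rfl, hcond⟩)
    have hpEs : ∀ i, E (p i) (s i) ↔
        (if E c (s i) then E (t' 0) (t' 3) else E (t 0) (t 3)) := by
      intro i
      have h := hppat i (s i) (by simp)
      constructor
      · intro hE
        by_contra hcon
        refine (h.2 ?_) hE
        rintro (⟨heq, -⟩ | ⟨-, hcond⟩)
        · exact hsc i heq
        · exact hcon hcond
      · intro hcond
        exact h.1 (Or.inr ⟨rfl, hcond⟩)
    obtain ⟨w, hwinj, hwD, hwne, hwpat⟩ := fresh_tuple hG hext k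
      (fun i => insert c (insert (s i) {p i}))
      (fun i a =>
        (a = c ∧ (if E c (s i) then E (t' 1) (t' 2) else E (t 1) (t 2))) ∨
        (a = s i ∧ (if E c (s i) then E (t' 1) (t' 3) else E (t 1) (t 3))) ∨
        (a = p i ∧ (if E c (s i) then E (t' 0) (t' 1) else E (t 0) (t 1))))
      (insert c ((Finset.univ.image s) ∪ (Finset.univ.image p)))
    have hwc : ∀ i, w i ≠ c := fun i => hwne i c (by simp)
    have hws : ∀ i1 i2, w i1 ≠ s i2 := fun i1 i2 h => (hwD i1) (by
      rw [h]
      exact Finset.mem_insert_of_mem (Finset.mem_union_left _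
        (Finset.mem_image.2 ⟨i2, Finset.mem_univ _, rfl⟩)))
    have hwp : ∀ i1 i2, w i1 ≠ p i2 := fun i1 i2 h => (hwD i1) (by
      rw [h]
      exact Finset.mem_insert_of_mem (Finset.mem_union_right _
        (Finset.mem_image.2 ⟨i2, Finset.mem_univ _, rfl⟩)))
    have hwEc : ∀ i, E (w i) c ↔
        (if E c (s i) then E (t' 1) (t' 2) else E (t 1) (t 2)) := by
      intro i
      have h := hwpat i c (by simp)
      constructor
      · intro hE
        by_contra hcon
        refine (h.2 ?_) hE
        rintro (⟨-, hcond⟩ | ⟨heq, -⟩ | ⟨heq, -⟩)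
        · exact hcon hcond
        · exact hsc i heq.symm
        · exact hpc i heq.symm
      · intro hcond
        exact h.1 (Or.inl ⟨rfl, hcond⟩)
    have hwEs : ∀ i, E (w i) (s i) ↔
        (if E c (s i) then E (t' 1) (t' 3) else E (t 1) (t 3)) := by
      intro i
      have h := hwpat i (s i) (by simp)
      constructor
      · intro hE
        by_contra hcon
        refine (h.2 ?_) hE
        rintro (⟨heq, -⟩ | ⟨-, hcond⟩ | ⟨heq, -⟩)
        · exact hsc i heq
        · exact hcon hcond
        · exact hps i i heq.symm
      · intro hcond
        exact h.1 (Or.inr (Or.inl ⟨rfl, hcond⟩))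
    have hwEp : ∀ i, E (w i) (p i) ↔
        (if E c (s i) then E (t' 0) (t' 1) else E (t 0) (t 1)) := by
      intro i
      have h := hwpat i (p i) (by simp)
      constructor
      · intro hE
        by_contra hcon
        refine (h.2 ?_) hE
        rintro (⟨heq, -⟩ | ⟨heq, -⟩ | ⟨-, hcond⟩)
        · exact hpc i heq
        · exact hps i i heq
        · exact hcon hcond
      · intro hcond
        exact h.1 (Or.inr (Or.inr ⟨rfl, hcond⟩))
    -- rows
    have hrow : ∀ i, ∃ rw, rw ∈ R ∧ rw 0 = p i ∧ rw 1 = w i ∧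
        rw 2 = c ∧ rw 3 = s i := by
      intro i
      by_cases hcs : E c (s i)
      · obtain ⟨α, hα, hαx⟩ := exists_auto hG hext (n := 4) t' ![p i, w i, c, s i]
          ht'inj
          (ne_pack4 _ (Ne.symm (hwp i i)) (hpc i) (hps i i) (hwc i) (hws i i)
            (Ne.symm (hsc i)))
          (rel_pack4 hG _ _
            (by
              show E (t' 0) (t' 1) ↔ E (p i) (w i)
              rw [show E (p i) (w i) ↔ E (w i) (p i) from
                ⟨fun h => hG.1 _ _ h, fun h => hG.1 _ _ h⟩, hwEp, if_pos hcs])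
            (by
              show E (t' 0) (t' 2) ↔ E (p i) c
              rw [hpEc, if_pos hcs])
            (by
              show E (t' 0) (t' 3) ↔ E (p i) (s i)
              rw [hpEs, if_pos hcs])
            (by
              show E (t' 1) (t' 2) ↔ E (w i) c
              rw [hwEc, if_pos hcs])
            (by
              show E (t' 1) (t' 3) ↔ E (w i) (s i)
              rw [hwEs, if_pos hcs])
            (by
              show E (t' 2) (t' 3) ↔ E c (s i)
              exact iff_of_true ht'E hcs))
        refine ⟨fun pos => α (t' pos), hinv α hα t' ht'R, ?_, ?_, ?_, ?_⟩
        · simpa using hαx 0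
        · simpa using hαx 1
        · simpa using hαx 2
        · simpa using hαx 3
      · obtain ⟨α, hα, hαx⟩ := exists_auto hG hext (n := 4) t ![p i, w i, c, s i]
          htinj
          (ne_pack4 _ (Ne.symm (hwp i i)) (hpc i) (hps i i) (hwc i) (hws i i)
            (Ne.symm (hsc i)))
          (rel_pack4 hG _ _
            (by
              show E (t 0) (t 1) ↔ E (p i) (w i)
              rw [show E (p i) (w i) ↔ E (w i) (p i) from
                ⟨fun h => hG.1 _ _ h, fun h => hG.1 _ _ h⟩, hwEp, if_neg hcs])
            (by
              show E (t 0) (t 2) ↔ E (p i) c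
              rw [hpEc, if_neg hcs])
            (by
              show E (t 0) (t 3) ↔ E (p i) (s i)
              rw [hpEs, if_neg hcs])
            (by
              show E (t 1) (t 2) ↔ E (w i) c
              rw [hwEc, if_neg hcs])
            (by
              show E (t 1) (t 3) ↔ E (w i) (s i)
              rw [hwEs, if_neg hcs])
            (by
              show E (t 2) (t 3) ↔ E c (s i)
              exact iff_of_false htN.2 hcs))
        refine ⟨fun pos => α (t pos), hinv α hα t htR, ?_, ?_, ?_, ?_⟩
        · simpa using hαx 0
        · simpa using hαx 1
        · simpa using hαx 2
        · simpa using hαx 3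
    choose rwG hrwR hrw0 hrw1 hrw2 hrw3 using hrow
    have hψR : (fun q => f (fun i => rwG i q)) ∈ R := hpres rwG hrwR
    have hψ0 : (fun q => f (fun i => rwG i q)) 0 = f p := by
      show f (fun i => rwG i 0) = _
      congr 1
      funext i
      exact hrw0 i
    have hψ1 : (fun q => f (fun i => rwG i q)) 1 = f w := by
      show f (fun i => rwG i 1) = _
      congr 1
      funext i
      exact hrw1 i
    have hψ2 : (fun q => f (fun i => rwG i q)) 2 = f (fun _ => c) := by
      show f (fun i => rwG i 2) = _
      congr 1
      funext i
      exact hrw2 i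
    have hψ3 : (fun q => f (fun i => rwG i q)) 3 = f s := by
      show f (fun i => rwG i 3) = _
      congr 1
      funext i
      exact hrw3 i
    -- level of the fresh pair (p, w)
    have hlevpw : (Finset.univ.filter fun i => E (p i) (w i)).card = m ∨
        (Finset.univ.filter fun i => E (p i) (w i)).card = m - 1 := by
      have hpt : ∀ i, E (p i) (w i) ↔ ¬ E c (s i) := by
        intro i
        rw [show E (p i) (w i) ↔ E (w i) (p i) from
          ⟨fun h => hG.1 _ _ h, fun h => hG.1 _ _ h⟩, hwEp]
        by_cases hcs : E c (s i)
        · rw [if_pos hcs]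
          exact iff_of_false ht'N.2 (fun h => h hcs)
        · rw [if_neg hcs]
          exact iff_of_true htE hcs
      have hseteq : (Finset.univ.filter fun i => E (p i) (w i)) =
          (Finset.univ.filter fun i => ¬ E c (s i)) := by
        refine Finset.filter_congr ?_
        intro i _
        exact hpt i
      rw [hseteq, filter_neg_card]
      rcases hlevf with h | h
      · left; omega
      · right; omega
    have hV01 : V (f p) (f w) := factB p w hpinj hwinj
      (fun i1 i2 => Ne.symm (hwp i2 i1)) hlevpw
    have hnV23 := hnoV' (fun q => f (fun i => rwG i q)) hψR (by beta_reduce at hψ0 hψ1 ⊢; rw [hψ0, hψ1]; exact hV01)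
    beta_reduce at hψ2 hψ3; rw [hψ2, hψ3] at hnV23
    exact hWne _ _ hfus hnV23


theorem stmt3 {k : ℕ} (E : A → A → Prop) (hG : IsSimpleGraph E)
    [Countable A] [Infinite A] (hext : ExtensionProperty E)
    (hk : 3 ≤ k)
    (f : (Fin k → A) → A) (hqnu : IsQnu f)
    (hfE : PreservesRel f E) (hfN : PreservesRel f (NRel E))
    (hfNe : PreservesRel f (fun a b => a ≠ b))
    (R : Set (Fin 4 → A)) (hpres : Preserves f R) (hinv : AutoInvariant E R)
    (hR : ((∃ t ∈ R, IsOP E (NRel E) t ∧ t 1 = t 2) ∧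
           (∃ t' ∈ R, IsOP (NRel E) E t' ∧ t' 1 = t' 2)) ∨
          ((∃ t ∈ R, IsOP E (NRel E) t ∧ Function.Injective t) ∧
           (∃ t' ∈ R, IsOP (NRel E) E t' ∧ Function.Injective t')))
    (m : ℕ) (hm1 : 1 ≤ m) (hmk : m ≤ k) :
    ((∀ u s : Fin k → A, ENConnCI E u s → nECount E u s = m → E (f u) (f s)) →
      ((∀ u s : Fin k → A, ENConnCI E u s →
          (nECount E u s = k - m ∨ nECount E u s = k - m + 1) →
          NRel E (f u) (f s)) ∨
       (∃ t ∈ R, IsOP E E t) ∨ (∃ t ∈ R, IsOP (NRel E) (NRel E) t))) ∧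
    ((∀ u s : Fin k → A, ENConnCI E u s → nECount E u s = m → NRel E (f u) (f s)) →
      ((∀ u s : Fin k → A, ENConnCI E u s →
          (nECount E u s = k - m ∨ nECount E u s = k - m + 1) →
          E (f u) (f s)) ∨
       (∃ t ∈ R, IsOP E E t) ∨ (∃ t ∈ R, IsOP (NRel E) (NRel E) t))) := by
  constructor
  · intro hH
    by_cases hEE : ∃ t ∈ R, IsOP E E t
    · exact Or.inr (Or.inl hEE)
    by_cases hNN : ∃ t ∈ R, IsOP (NRel E) (NRel E) t
    · exact Or.inr (Or.inr hNN)
    left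
    exact master E hG hext hk f hqnu hfNe R hpres hinv hR m hm1 hmk E (NRel E)
      (fun a b h => hG.1 a b h)
      (fun a b hne hnv => ⟨hne, hnv⟩)
      (fun a b hne hnw => by
        by_contra h
        exact hnw ⟨hne, h⟩)
      hEE hNN hH
  · intro hH
    by_cases hEE : ∃ t ∈ R, IsOP E E t
    · exact Or.inr (Or.inl hEE)
    by_cases hNN : ∃ t ∈ R, IsOP (NRel E) (NRel E) t
    · exact Or.inr (Or.inr hNN)
    left
    exact master E hG hext hk f hqnu hfNe R hpres hinv hR m hm1 hmk (NRel E) E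
      (fun a b h => nrel_symm hG h)
      (fun a b hne hnv => by
        by_contra h
        exact hnv ⟨hne, h⟩)
      (fun a b hne hnw => ⟨hne, hnw⟩)
      hNN hEE hH
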